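/- Let M and N be topological spaces, b ∈ M, r ∈ N, f : M → N a function, h₁, h₂ : M → M continuous maps each homotopic to the identity map of M, and φ : M × M × N → M × M × N a continuous map that is homotopic to the identity map of M × M × N and satisfies φ(x, b, r) = (h₁ x, h₂ x, f x) for all x ∈ M. Then M is simply connected: M is path-connected and its fundamental group is trivial. -/

import Mathlib

/-- Under the approximate cloning hypotheses, `M` is simply connected. -/
theorem no_approximate_cloning_simply_connected
    {M N : Type*} [TopologicalSpace M] [TopologicalSpace N]
    (b : M) (r : N) (f : M → N)
    (h₁ h₂ : C(M, M))
    (hh₁ : h₁.Homotopic (ContinuousMap.id M))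
    (hh₂ : h₂.Homotopic (ContinuousMap.id M))
    (φ : C(M × M × N, M × M × N))
    (hφ : φ.Homotopic (ContinuousMap.id (M × M × N)))
    (hclone : ∀ x : M, φ (x, b, r) = (h₁ x, h₂ x, f x)) :
    SimplyConnectedSpace M := by
  -- inclusion x ↦ (x, b, r)
  let ι : C(M, M × M × N) := ⟨fun x => (x, b, r), continuous_id.prodMk continuous_const⟩
  -- projection to second M factor
  let p : C(M × M × N, M) := ⟨fun z => z.2.1, (continuous_fst.comp continuous_snd)⟩
  have key : (p.comp (φ.comp ι)) = h₂ := by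
    ext x
    simp [ι, p, ContinuousMap.comp_apply, hclone x]
  have h2null : h₂.Homotopic (ContinuousMap.const M b) := by
    rw [← key]
    have : (φ.comp ι).Homotopic ((ContinuousMap.id _).comp ι) :=
      ContinuousMap.Homotopic.comp hφ (ContinuousMap.Homotopic.refl ι)
    have h3 : (p.comp (φ.comp ι)).Homotopic (p.comp ((ContinuousMap.id _).comp ι)) :=
      ContinuousMap.Homotopic.comp (ContinuousMap.Homotopic.refl p) this
    have : p.comp ((ContinuousMap.id _).comp ι) = ContinuousMap.const M b := by
      ext x; simp [ι, p]
    rwa [this] at h3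
  have idnull : (ContinuousMap.id M).Homotopic (ContinuousMap.const M b) :=
    hh₂.symm.trans h2null
  have : ContractibleSpace M :=
    (contractible_iff_id_nullhomotopic M).2 ⟨b, idnull⟩
  infer_instance
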